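/- Let A be a ring with property (SF) which satisfies the strong rank condition. Let N be a free A-module and M ≤ N a submodule such that at least one of M or N is finitely generated, and let L be the algebraic closure of the extension M ≤ N (so M ≤alg L ≤* N). Then L equals the intersection of the kernels of all A-linear maps φ : N → A which vanish identically on M; that is, x ∈ L if and only if φ(x) = 0 for every A-linear φ : N → A with φ|_M ≡ 0. -/

import Mathlib

universe u v

/-- Property (SF): every submodule of every free `A`-module is a free `A`-module. -/
def HasSF (A : Type u) [Ring A] : Prop :=
  ∀ (M : Type v) [AddCommGroup M] [Module A M], Module.Free A M →
    ∀ N : Submodule A M, Module.Free A ↥N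

/-- `M` is a free factor of `N` (written `M ≤* N`): `M ≤ N` and there is a submodule
`M' ≤ N` with `M ⊓ M' = ⊥` and `M ⊔ M' = N` such that `M'` is a free module. -/
def IsFreeFactor {A : Type*} [Ring A] {P : Type*} [AddCommGroup P] [Module A P]
    (M N : Submodule A P) : Prop :=
  M ≤ N ∧ ∃ M' : Submodule A P, M' ≤ N ∧ M ⊓ M' = ⊥ ∧ M ⊔ M' = N ∧ Module.Free A ↥M'

/-- The extension `M ≤ N` is algebraic: the only submodule `L` with `M ≤ L ≤ N`
which is a free factor of `N` is `L = N`. -/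
def IsAlgExt {A : Type*} [Ring A] {P : Type*} [AddCommGroup P] [Module A P]
    (M N : Submodule A P) : Prop :=
  M ≤ N ∧ ∀ L : Submodule A P, M ≤ L → IsFreeFactor L N → L = N

theorem algebraicClosure_eq_iInf_ker {A : Type u} [Ring A] [StrongRankCondition A]
    (hSF : HasSF.{u, v} A)
    (N : Type v) [AddCommGroup N] [Module A N] [Module.Free A N]
    (M : Submodule A N) (hfg : M.FG ∨ Module.Finite A N)
    (L : Submodule A N) (hLalg : IsAlgExt M L) (hLff : IsFreeFactor L ⊤) :
    ∀ x : N, x ∈ L ↔ ∀ φ : N →ₗ[A] A, (∀ y ∈ M, φ y = 0) → φ x = 0 := by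
  classical
  intro x
  constructor
  · intro hx φ hφ
    set ψ : ↥L →ₗ[A] A := φ.comp L.subtype with hψdef
    by_cases hψ : ψ = 0
    · have : φ x = ψ ⟨x, hx⟩ := rfl
      rw [this, hψ]; rfl
    · -- ψ ≠ 0, so N is nontrivial
      obtain ⟨y, hy⟩ : ∃ y : ↥L, ψ y ≠ 0 := by
        by_contra h
        push_neg at h
        exact hψ (LinearMap.ext fun z => by simpa using h z)
      have hNnt : Nontrivial N := by
        refine nontrivial_of_ne (y : N) 0 fun h0 => hy ?_
        have : (y : ↥L) = 0 := Subtype.ext h0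
        rw [this, map_zero]
      let b := Module.Free.chooseBasis A N
      obtain ⟨i⟩ := b.index_nonempty
      let f : A →ₗ[A] N := LinearMap.toSpanSingleton A N (b i)
      have hf : Function.Injective f := by
        have h0 : ∀ a : A, a • b i = 0 → a = 0 := by
          intro a ha
          have := congrArg (fun z => b.repr z i) ha
          simpa using this
        intro a1 a2 h12
        have : (a1 - a2) • b i = 0 := by
          rw [sub_smul, sub_eq_zero]
          exact h12
        exact sub_eq_zero.mp (h0 _ this)
      set I := LinearMap.range ψ with hIdef
      haveI hmapfree : Module.Free A ↥(I.map f) := hSF N ‹Module.Free A N› (I.map f)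
      haveI hIfree : Module.Free A ↥I :=
        Module.Free.of_equiv (Submodule.equivMapOfInjective f hf I).symm
      obtain ⟨s, hs⟩ := Module.projective_lifting_property ψ.rangeRestrict
        (LinearMap.id : ↥I →ₗ[A] ↥I) ψ.surjective_rangeRestrict
      set L' := Submodule.map L.subtype (LinearMap.ker ψ) with hL'def
      set K' := Submodule.map L.subtype (LinearMap.range s) with hK'def
      have hML' : M ≤ L' := by
        intro m hm
        exact ⟨⟨m, hLalg.1 hm⟩, by simpa [hψdef] using hφ m hm, rfl⟩
      have hker : LinearMap.ker ψ ⊓ LinearMap.range s = ⊥ := by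
        rw [eq_bot_iff]
        rintro z ⟨hz1, w, hw⟩
        have hw0 : w = 0 := by
          have h1 := LinearMap.congr_fun hs w
          simp only [LinearMap.comp_apply, LinearMap.id_apply] at h1
          have h2 : (w : A) = ψ (s w) := by
            conv_lhs => rw [← h1]
            rfl
          refine Subtype.ext ?_
          rw [h2, hw]
          exact hz1
        simp [← hw, hw0]
      have hsup : LinearMap.ker ψ ⊔ LinearMap.range s = ⊤ := by
        rw [eq_top_iff]
        intro z _
        have hker' : z - s (ψ.rangeRestrict z) ∈ LinearMap.ker ψ := by
          rw [← LinearMap.ker_rangeRestrict, LinearMap.mem_ker, map_sub]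
          have h1 := LinearMap.congr_fun hs (ψ.rangeRestrict z)
          simp only [LinearMap.comp_apply, LinearMap.id_apply] at h1
          rw [h1, sub_self]
        exact Submodule.mem_sup.mpr ⟨_, hker', _, ⟨_, rfl⟩, by abel⟩
      have hff : IsFreeFactor L' L := by
        refine ⟨Submodule.map_subtype_le _ _, K', Submodule.map_subtype_le _ _, ?_, ?_,
          hSF N ‹Module.Free A N› K'⟩
        · rw [hL'def, hK'def, ← Submodule.map_inf _ (Submodule.injective_subtype L), hker,
            Submodule.map_bot]
        · rw [hL'def, hK'def, ← Submodule.map_sup, hsup, Submodule.map_top,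
            Submodule.range_subtype]
      have hL'eq : L' = L := hLalg.2 L' hML' hff
      obtain ⟨z, hz, hzx⟩ : x ∈ L' := hL'eq ▸ hx
      have : φ x = ψ z := by rw [← hzx]; rfl
      rw [this]
      exact LinearMap.mem_ker.mp hz
  · intro h
    obtain ⟨-, L', -, h1, h2, hL'free⟩ := hLff
    have hcompl : IsCompl L L' := ⟨disjoint_iff.mpr h1, codisjoint_iff.mpr h2⟩
    set π : N →ₗ[A] ↥L' := L'.linearProjOfIsCompl L hcompl.symm with hπdef
    by_contra hx
    have hπx : π x ≠ 0 := by
      intro h0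
      apply hx
      have hself : (L.linearProjOfIsCompl L' hcompl x : N) + (L'.linearProjOfIsCompl L hcompl.symm x : N) = x :=
        Submodule.projection_add_projection_eq_self hcompl x
      rw [hπdef] at h0
      rw [h0] at hself
      simp only [Submodule.coe_zero, add_zero] at hself
      rw [← hself]
      exact (L.linearProjOfIsCompl L' hcompl x).2
    set c := Module.Free.chooseBasis A ↥L' with hcdef
    obtain ⟨j, hj⟩ : ∃ j, c.repr (π x) j ≠ 0 := by
      by_contra hc
      push_neg at hc
      refine hπx (c.repr.injective ?_)
      ext j
      simp [hc]
    set φ : N →ₗ[A] A := (c.coord j).comp π with hφdef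
    have hφM : ∀ y ∈ M, φ y = 0 := by
      intro y hy
      have hyL : y ∈ L := hLalg.1 hy
      have : π y = 0 :=
        Submodule.projectionOnto_apply_of_mem_right hcompl.symm hyL
      simp [hφdef, this]
    have := h φ hφM
    rw [hφdef] at this
    simp only [LinearMap.comp_apply, Module.Basis.coord_apply] at this
    exact hj this
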